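/- Let f : (a,b) → ℝ be a C² function with a unique maximum at c ∈ (a,b) and f''(c) < 0, and suppose ∫_a^b e^{λf(t)}dt is finite for large λ. Then as λ → ∞, ∫_a^b e^{λ f(t)} dt ∼ e^{λ f(c)} · (2π / (λ |f''(c)|))^{1/2}, i.e. the ratio of the two sides tends to 1. -/

import Mathlib

open Filter MeasureTheory Set
open scoped Topology

/-- Lagrange form of 2nd order Taylor remainder, base point `c`, endpoint `t`. -/
lemma lagrange2 (f : ℝ → ℝ) (c t : ℝ) (hct : c < t)
    (hf : ∀ x ∈ Set.Icc c t, HasDerivAt f (deriv f x) x)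
    (hf' : ∀ x ∈ Set.Icc c t, HasDerivAt (deriv f) (deriv (deriv f) x) x) :
    ∃ η ∈ Set.Ioo c t,
      f t - f c - deriv f c * (t - c) = deriv (deriv f) η / 2 * (t - c) ^ 2 := by
  have hFcont : ContinuousOn (fun s => f s - deriv f c * s) (Set.Icc c t) :=
    fun x hx => ((hf x hx).continuousAt.continuousWithinAt).sub
      ((continuous_const.mul continuous_id).continuousOn x hx)
  have hGcont : ContinuousOn (fun s => (s - c) ^ 2) (Set.Icc c t) :=
    (continuous_pow 2).comp_continuousOn (continuous_id.sub continuous_const).continuousOn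
  obtain ⟨ξ, hξ, hξeq⟩ := exists_ratio_hasDerivAt_eq_ratio_slope
    (fun s => f s - deriv f c * s) (fun x => deriv f x - deriv f c) hct hFcont
    (fun x hx => (hf x (Set.mem_Icc_of_Ioo hx)).sub
      ((hasDerivAt_id x).const_mul (deriv f c) |>.congr_deriv (by ring)))
    (fun s => (s - c) ^ 2) (fun x => 2 * (x - c)) hGcont
    (fun x hx => by
      simpa using (((hasDerivAt_id x).sub_const c).fun_pow 2))
  obtain ⟨η, hη, hηeq⟩ := exists_hasDerivAt_eq_slope (deriv f) (deriv (deriv f)) hξ.1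
    (fun x hx => (hf' x ⟨hx.1, le_trans hx.2 hξ.2.le⟩).continuousAt.continuousWithinAt)
    (fun x hx => hf' x ⟨hx.1.le, le_trans hx.2.le hξ.2.le⟩)
  refine ⟨η, ⟨hη.1, lt_trans hη.2 hξ.2⟩, ?_⟩
  have hξc : ξ - c ≠ 0 := sub_ne_zero.2 (ne_of_gt hξ.1)
  have h1 : deriv f ξ - deriv f c = deriv (deriv f) η * (ξ - c) := by
    field_simp at hηeq; linarith [hηeq]
  have h2 := hξeq
  simp only [sub_self, ne_eq] at h2
  -- h2 : ((t-c)^2 - (c-c)^2) * (deriv f ξ - deriv f c) = (f t - _ - (f c - _)) * (2*(ξ-c))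
  rw [h1] at h2
  have h3 : ((t - c) ^ 2 * deriv (deriv f) η) * (ξ - c)
      = ((f t - f c - deriv f c * (t - c)) * 2) * (ξ - c) := by
    ring_nf; ring_nf at h2; linarith
  have h4 := mul_right_cancel₀ hξc h3
  linear_combination -h4 / 2

lemma lagrange2' (f : ℝ → ℝ) (c t : ℝ) (hct : t < c)
    (hf : ∀ x ∈ Set.Icc t c, HasDerivAt f (deriv f x) x)
    (hf' : ∀ x ∈ Set.Icc t c, HasDerivAt (deriv f) (deriv (deriv f) x) x) :
    ∃ η ∈ Set.Ioo t c,
      f t - f c - deriv f c * (t - c) = deriv (deriv f) η / 2 * (t - c) ^ 2 := by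
  have hFcont : ContinuousOn (fun s => f s - deriv f c * s) (Set.Icc t c) :=
    fun x hx => ((hf x hx).continuousAt.continuousWithinAt).sub
      ((continuous_const.mul continuous_id).continuousOn x hx)
  have hGcont : ContinuousOn (fun s => (s - c) ^ 2) (Set.Icc t c) :=
    (continuous_pow 2).comp_continuousOn (continuous_id.sub continuous_const).continuousOn
  obtain ⟨ξ, hξ, hξeq⟩ := exists_ratio_hasDerivAt_eq_ratio_slope
    (fun s => f s - deriv f c * s) (fun x => deriv f x - deriv f c) hct hFcont
    (fun x hx => (hf x (Set.mem_Icc_of_Ioo hx)).sub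
      ((hasDerivAt_id x).const_mul (deriv f c) |>.congr_deriv (by ring)))
    (fun s => (s - c) ^ 2) (fun x => 2 * (x - c)) hGcont
    (fun x hx => by
      simpa using (((hasDerivAt_id x).sub_const c).fun_pow 2))
  obtain ⟨η, hη, hηeq⟩ := exists_hasDerivAt_eq_slope (deriv f) (deriv (deriv f)) hξ.2
    (fun x hx => (hf' x ⟨le_trans hξ.1.le hx.1, hx.2⟩).continuousAt.continuousWithinAt)
    (fun x hx => hf' x ⟨le_trans hξ.1.le hx.1.le, hx.2.le⟩)
  refine ⟨η, ⟨lt_trans hξ.1 hη.1, hη.2⟩, ?_⟩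
  have hξc : ξ - c ≠ 0 := sub_ne_zero.2 (ne_of_lt hξ.2)
  have h1 : deriv f ξ - deriv f c = deriv (deriv f) η * (ξ - c) := by
    have hcξ : c - ξ ≠ 0 := sub_ne_zero.2 (ne_of_gt hξ.2)
    field_simp at hηeq; linarith [hηeq]
  rw [h1] at hξeq
  have h3 : (-((t - c) ^ 2) * deriv (deriv f) η) * (ξ - c)
      = ((f c - deriv f c * c - (f t - deriv f c * t)) * 2) * (ξ - c) := by
    ring_nf; ring_nf at hξeq; linarith
  have h4 := mul_right_cancel₀ hξc h3
  linear_combination h4 / 2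

lemma quad_approx {a b c : ℝ} (f : ℝ → ℝ) (hc : c ∈ Set.Ioo a b)
    (hf : ContDiffOn ℝ 2 f (Set.Ioo a b)) :
    ∀ ε > 0, ∃ δ > 0, Set.Ioo (c - δ) (c + δ) ⊆ Set.Ioo a b ∧
      ∀ t ∈ Set.Ioo (c - δ) (c + δ),
        |f t - f c - deriv f c * (t - c) - deriv (deriv f) c / 2 * (t - c) ^ 2|
          ≤ ε * (t - c) ^ 2 := by
  intro ε hε
  have hd1 : ContDiffOn ℝ 1 (deriv f) (Set.Ioo a b) :=
    hf.deriv_of_isOpen isOpen_Ioo (by norm_num)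
  have hderiv1 : ∀ x ∈ Set.Ioo a b, HasDerivAt f (deriv f x) x := fun x hx =>
    ((hf.differentiableOn two_ne_zero x hx).differentiableAt
      (isOpen_Ioo.mem_nhds hx)).hasDerivAt
  have hderiv2 : ∀ x ∈ Set.Ioo a b, HasDerivAt (deriv f) (deriv (deriv f) x) x := fun x hx =>
    ((hd1.differentiableOn one_ne_zero x hx).differentiableAt
      (isOpen_Ioo.mem_nhds hx)).hasDerivAt
  have hcont2 : ContinuousAt (deriv (deriv f)) c :=
    (hd1.continuousOn_deriv_of_isOpen isOpen_Ioo le_rfl).continuousAt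
      (isOpen_Ioo.mem_nhds hc)
  obtain ⟨δ₁, hδ₁, hball⟩ := Metric.continuousAt_iff.1 hcont2 ε hε
  set δ := min δ₁ (min (c - a) (b - c)) with hδdef
  have hδ : 0 < δ := lt_min hδ₁ (lt_min (sub_pos.2 hc.1) (sub_pos.2 hc.2))
  have hsub : Set.Ioo (c - δ) (c + δ) ⊆ Set.Ioo a b := by
    intro x hx
    constructor
    · have : c - (c - a) ≤ c - δ := by
        have := min_le_of_right_le (min_le_left (c - a) (b - c)) (b := δ₁); linarith [this]
      linarith [hx.1]
    · have : c + δ ≤ c + (b - c) := by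
        have := min_le_of_right_le (min_le_right (c - a) (b - c)) (b := δ₁); linarith [this]
      linarith [hx.2]
  refine ⟨δ, hδ, hsub, fun t ht => ?_⟩
  rcases lt_trichotomy t c with h | h | h
  · obtain ⟨η, hη, heq⟩ := lagrange2' f c t h
      (fun x hx => hderiv1 x (hsub ⟨lt_of_lt_of_le (by linarith [ht.1]) hx.1,
        lt_of_le_of_lt hx.2 (by linarith [hδ])⟩))
      (fun x hx => hderiv2 x (hsub ⟨lt_of_lt_of_le (by linarith [ht.1]) hx.1,
        lt_of_le_of_lt hx.2 (by linarith [hδ])⟩))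
    have hηd : dist η c < δ₁ := by
      rw [Real.dist_eq, abs_lt]
      constructor
      · have h3 : c - δ < η := lt_trans ht.1 hη.1
        have h2 : δ ≤ δ₁ := min_le_left _ _
        linarith
      · have h2 : δ ≤ δ₁ := min_le_left _ _
        linarith [hη.2, hδ]
    have hb := hball hηd
    rw [Real.dist_eq] at hb
    have hrw : f t - f c - deriv f c * (t - c) - deriv (deriv f) c / 2 * (t - c) ^ 2
        = (deriv (deriv f) η - deriv (deriv f) c) / 2 * (t - c) ^ 2 := by
      rw [show f t - f c - deriv f c * (t - c) = deriv (deriv f) η / 2 * (t - c) ^ 2 from heq]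
      ring
    rw [hrw, abs_mul, abs_div, abs_of_nonneg (sq_nonneg (t - c))]
    have : |deriv (deriv f) η - deriv (deriv f) c| / |(2 : ℝ)| ≤ ε := by
      rw [abs_two]; linarith
    nlinarith [sq_nonneg (t - c), abs_nonneg (deriv (deriv f) η - deriv (deriv f) c)]
  · simp [h]
  · obtain ⟨η, hη, heq⟩ := lagrange2 f c t h
      (fun x hx => hderiv1 x (hsub ⟨lt_of_lt_of_le (by linarith [hδ]) hx.1,
        lt_of_le_of_lt hx.2 (by linarith [ht.2])⟩))
      (fun x hx => hderiv2 x (hsub ⟨lt_of_lt_of_le (by linarith [hδ]) hx.1,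
        lt_of_le_of_lt hx.2 (by linarith [ht.2])⟩))
    have hηd : dist η c < δ₁ := by
      rw [Real.dist_eq, abs_lt]
      have h2 : δ ≤ δ₁ := min_le_left _ _
      constructor
      · linarith [hη.1, hδ]
      · linarith [hη.2, ht.2]
    have hb := hball hηd
    rw [Real.dist_eq] at hb
    have hrw : f t - f c - deriv f c * (t - c) - deriv (deriv f) c / 2 * (t - c) ^ 2
        = (deriv (deriv f) η - deriv (deriv f) c) / 2 * (t - c) ^ 2 := by
      rw [show f t - f c - deriv f c * (t - c) = deriv (deriv f) η / 2 * (t - c) ^ 2 from heq]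
      ring
    rw [hrw, abs_mul, abs_div, abs_of_nonneg (sq_nonneg (t - c))]
    have : |deriv (deriv f) η - deriv (deriv f) c| / |(2 : ℝ)| ≤ ε := by
      rw [abs_two]; linarith
    nlinarith [sq_nonneg (t - c), abs_nonneg (deriv (deriv f) η - deriv (deriv f) c)]

lemma sqrt_mul_exp_decay (k C : ℝ) (hk : 0 < k) :
    Tendsto (fun x : ℝ => Real.sqrt x * (C * Real.exp (-(k * x)))) atTop (𝓝 0) := by
  have h := (tendsto_rpow_mul_exp_neg_mul_atTop_nhds_zero (1/2) k hk).const_mul C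
  rw [mul_zero] at h
  refine h.congr' ?_
  filter_upwards [eventually_ge_atTop (0:ℝ)] with x hx
  rw [Real.sqrt_eq_rpow]
  ring_nf

lemma gauss_shift (B cc : ℝ) :
    ∫ t : ℝ, Real.exp (-(B * (t - cc) ^ 2)) = Real.sqrt (Real.pi / B) := by
  rw [show (fun t : ℝ => Real.exp (-(B * (t - cc) ^ 2)))
      = fun t : ℝ => (fun u : ℝ => Real.exp (-B * u ^ 2)) (t - cc) by
    funext t; simp [neg_mul]]
  rw [integral_sub_right_eq_self (fun u : ℝ => Real.exp (-B * u ^ 2)) cc]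
  exact integral_gaussian B

lemma gauss_shift_integrable {B : ℝ} (hB : 0 < B) (cc : ℝ) :
    Integrable (fun t : ℝ => Real.exp (-(B * (t - cc) ^ 2))) := by
  have h := (integrable_exp_neg_mul_sq hB).comp_sub_right cc
  refine h.congr ?_
  filter_upwards with x
  simp [neg_mul]

set_option maxHeartbeats 2000000 in
lemma laplace_main {a b c : ℝ} {f : ℝ → ℝ} (hc : c ∈ Set.Ioo a b)
    (hf : ContDiffOn ℝ 2 f (Set.Ioo a b))
    (hmax : ∀ t ∈ Set.Ioo a b, t ≠ c → f t < f c)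
    (hsep : ∀ δ > 0, ∃ ε > 0, ∀ t ∈ Set.Ioo a b, δ ≤ |t - c| → f t ≤ f c - ε)
    (hf'' : deriv (deriv f) c < 0)
    (hint : ∀ᶠ lam in atTop, IntegrableOn (fun t => Real.exp (lam * f t)) (Set.Ioo a b)) :
    Tendsto (fun lam : ℝ => Real.sqrt lam * ∫ t in Set.Ioo a b, Real.exp (lam * (f t - f c)))
      atTop (𝓝 (Real.sqrt (2 * Real.pi / (-deriv (deriv f) c)))) := by
  set A : ℝ := -deriv (deriv f) c with hAdef
  have hA : 0 < A := neg_pos.2 hf''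
  have hderc : deriv f c = 0 := by
    have hfd : DifferentiableAt ℝ f c :=
      (hf.differentiableOn two_ne_zero c hc).differentiableAt (isOpen_Ioo.mem_nhds hc)
    refine IsLocalMax.deriv_eq_zero ?_
    refine Filter.eventually_of_mem (isOpen_Ioo.mem_nhds hc) (fun t ht => ?_)
    by_cases h : t = c
    · simp [h]
    · exact (hmax t ht h).le
  obtain ⟨L0, hL0⟩ := eventually_atTop.1 hint
  set L1 : ℝ := max L0 1 with hL1def
  have hL11 : (1:ℝ) ≤ L1 := le_max_right _ _
  have hgint : ∀ lam : ℝ, L1 ≤ lam →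
      IntegrableOn (fun t => Real.exp (lam * (f t - f c))) (Set.Ioo a b) := by
    intro lam hlam
    have h0 := hL0 lam (le_trans (le_max_left _ _) hlam)
    have heq : (fun t => Real.exp (lam * (f t - f c)))
        = fun t => Real.exp (-(lam * f c)) * Real.exp (lam * f t) := by
      funext t; rw [← Real.exp_add]; ring_nf
    rw [heq]
    exact h0.const_mul _
  rw [Metric.tendsto_atTop]
  intro ε hε
  -- continuity of x ↦ √(2π/x) at A
  have hφ : ContinuousAt (fun x : ℝ => Real.sqrt (2 * Real.pi / x)) A :=
    Real.continuous_sqrt.continuousAt.comp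
      (ContinuousAt.div continuousAt_const continuousAt_id hA.ne')
  obtain ⟨d, hd, hφd⟩ := Metric.continuousAt_iff.1 hφ (ε/2) (by linarith)
  set ε₁ : ℝ := min (d/2) (A/2) with hε₁def
  have hε₁ : 0 < ε₁ := lt_min (by linarith) (by linarith)
  have hε₁A : ε₁ ≤ A/2 := min_le_right _ _
  have hAd : 0 < A - ε₁ := by linarith
  have hupφ : Real.sqrt (2 * Real.pi / (A - ε₁)) < Real.sqrt (2 * Real.pi / A) + ε/2 := by
    have h1 : dist (A - ε₁) A < d := by
      rw [Real.dist_eq]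
      have : |A - ε₁ - A| = ε₁ := by rw [show A - ε₁ - A = -ε₁ by ring, abs_neg, abs_of_pos hε₁]
      rw [this]; exact lt_of_le_of_lt (min_le_left _ _) (by linarith)
    have := hφd h1
    rw [Real.dist_eq, abs_lt] at this
    linarith [this.2]
  have hloφ : Real.sqrt (2 * Real.pi / A) - ε/2 < Real.sqrt (2 * Real.pi / (A + ε₁)) := by
    have h1 : dist (A + ε₁) A < d := by
      rw [Real.dist_eq]
      have : |A + ε₁ - A| = ε₁ := by rw [show A + ε₁ - A = ε₁ by ring, abs_of_pos hε₁]
      rw [this]; exact lt_of_le_of_lt (min_le_left _ _) (by linarith)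
    have := hφd h1
    rw [Real.dist_eq, abs_lt] at this
    linarith [this.1]
  obtain ⟨δ, hδ, hsub, hquad⟩ := quad_approx f hc hf (ε₁/2) (by positivity)
  have hquad' : ∀ t ∈ Set.Ioo (c - δ) (c + δ),
      f t - f c ≤ -((A - ε₁)/2 * (t - c)^2) ∧ -((A + ε₁)/2 * (t - c)^2) ≤ f t - f c := by
    intro t ht
    have h := hquad t ht
    rw [hderc, abs_le] at h
    have h2c : deriv (deriv f) c = -A := by rw [hAdef]; ring
    rw [h2c] at h
    constructor <;> nlinarith [h.1, h.2]
  obtain ⟨ε₀, hε₀, htail⟩ := hsep δ hδ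
  set B₁ : ℝ := (A - ε₁)/2 with hB₁def
  set B₂ : ℝ := (A + ε₁)/2 with hB₂def
  have hB₁ : 0 < B₁ := by rw [hB₁def]; linarith
  have hB₂ : 0 < B₂ := by rw [hB₂def]; linarith
  set S : Set ℝ := Set.Ioo (c - δ) (c + δ) with hSdef
  set C₀ : ℝ := ∫ t in Set.Ioo a b, Real.exp (L1 * (f t - f c)) with hC₀def
  have hC₀ : 0 ≤ C₀ := integral_nonneg (fun t => (Real.exp_pos _).le)
  have hdecay1 := sqrt_mul_exp_decay ε₀ (Real.exp (L1 * ε₀) * C₀) hε₀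
  have hdecay2 := sqrt_mul_exp_decay (B₂ * δ^2)
    (Real.exp (B₂ * δ^2) * Real.sqrt (Real.pi / B₂)) (by positivity)
  have hev1 : ∀ᶠ lam in atTop,
      |Real.sqrt lam * (Real.exp (L1 * ε₀) * C₀ * Real.exp (-(ε₀ * lam)))| < ε/2 := by
    have := Metric.tendsto_nhds.1 hdecay1 (ε/2) (by linarith)
    filter_upwards [this] with lam h
    rwa [Real.dist_0_eq_abs] at h
  have hev2 : ∀ᶠ lam in atTop,
      |Real.sqrt lam * (Real.exp (B₂ * δ^2) * Real.sqrt (Real.pi / B₂)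
        * Real.exp (-(B₂ * δ^2 * lam)))| < ε/2 := by
    have := Metric.tendsto_nhds.1 hdecay2 (ε/2) (by linarith)
    filter_upwards [this] with lam h
    rwa [Real.dist_0_eq_abs] at h
  obtain ⟨N, hN⟩ := eventually_atTop.1 (hev1.and hev2)
  refine ⟨max N (max L1 1), fun lam hlam => ?_⟩
  have hlamN : N ≤ lam := le_trans (le_max_left _ _) hlam
  have hlamL1 : L1 ≤ lam := le_trans (le_trans (le_max_left _ _) (le_max_right N _)) hlam
  have hlam1 : (1:ℝ) ≤ lam := le_trans hL11 hlamL1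
  have hlam0 : (0:ℝ) < lam := by linarith
  obtain ⟨hT₁, hT₂⟩ := hN lam hlamN
  set glam : ℝ → ℝ := fun t => Real.exp (lam * (f t - f c)) with hglamdef
  have hIioo : IntegrableOn glam (Set.Ioo a b) := hgint lam hlamL1
  have hIS : IntegrableOn glam S := hIioo.mono_set hsub
  have hITail : IntegrableOn glam (Set.Ioo a b \ S) := hIioo.mono_set Set.diff_subset
  have hg1 : Integrable (fun t : ℝ => Real.exp (-(lam * B₁ * (t - c)^2))) :=
    gauss_shift_integrable (by positivity) c
  have hg2 : Integrable (fun t : ℝ => Real.exp (-(lam * B₂ * (t - c)^2))) :=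
    gauss_shift_integrable (by positivity) c
  have hg3 : Integrable (fun t : ℝ => Real.exp (-(B₂ * (t - c)^2))) :=
    gauss_shift_integrable hB₂ c
  -- splitting
  have hsplit : ∫ t in Set.Ioo a b, glam t
      = (∫ t in S, glam t) + ∫ t in Set.Ioo a b \ S, glam t := by
    have h := setIntegral_union (f := glam) (μ := volume) disjoint_sdiff_right
      (measurableSet_Ioo.diff measurableSet_Ioo) hIS hITail
    rwa [Set.union_diff_cancel hsub] at h
  -- upper bound, central part
  have hup1 : ∫ t in S, glam t ≤ ∫ t in S, Real.exp (-(lam * B₁ * (t - c)^2)) := by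
    refine setIntegral_mono_on hIS hg1.integrableOn measurableSet_Ioo (fun t ht => ?_)
    refine Real.exp_le_exp.2 ?_
    have h := (hquad' t ht).1
    nlinarith [mul_le_mul_of_nonneg_left h hlam0.le]
  have hup1' : ∫ t in S, Real.exp (-(lam * B₁ * (t - c)^2))
      ≤ Real.sqrt (Real.pi / (lam * B₁)) := by
    rw [← gauss_shift (lam * B₁) c]
    exact setIntegral_le_integral hg1 (ae_of_all _ fun t => (Real.exp_pos _).le)
  -- upper bound, tail part
  have htailb : ∀ t ∈ Set.Ioo a b \ S,
      glam t ≤ Real.exp (-((lam - L1) * ε₀)) * Real.exp (L1 * (f t - f c)) := by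
    intro t ht
    have hd' : δ ≤ |t - c| := by
      rcases ht with ⟨htio, hts⟩
      rw [hSdef, Set.mem_Ioo, not_and_or] at hts
      rw [le_abs]
      rcases hts with h | h
      · push_neg at h; right; linarith
      · push_neg at h; left; linarith
    have h₁ : f t - f c ≤ -ε₀ := by have := htail t ht.1 hd'; linarith
    have heq : glam t = Real.exp ((lam - L1) * (f t - f c)) * Real.exp (L1 * (f t - f c)) := by
      rw [hglamdef]; rw [← Real.exp_add]; ring_nf
    rw [heq]
    refine mul_le_mul_of_nonneg_right (Real.exp_le_exp.2 ?_) (Real.exp_pos _).le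
    nlinarith [sub_nonneg.2 hlamL1]
  have hup2 : ∫ t in Set.Ioo a b \ S, glam t ≤ Real.exp (-((lam - L1) * ε₀)) * C₀ := by
    have step1 : ∫ t in Set.Ioo a b \ S, glam t
        ≤ ∫ t in Set.Ioo a b \ S,
            Real.exp (-((lam - L1) * ε₀)) * Real.exp (L1 * (f t - f c)) :=
      setIntegral_mono_on hITail
        (((hgint L1 le_rfl).mono_set Set.diff_subset).const_mul _)
        (measurableSet_Ioo.diff measurableSet_Ioo) htailb
    have step2 : ∫ t in Set.Ioo a b \ S,
          Real.exp (-((lam - L1) * ε₀)) * Real.exp (L1 * (f t - f c))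
        = Real.exp (-((lam - L1) * ε₀))
            * ∫ t in Set.Ioo a b \ S, Real.exp (L1 * (f t - f c)) :=
      integral_const_mul _ _
    have step3 : ∫ t in Set.Ioo a b \ S, Real.exp (L1 * (f t - f c)) ≤ C₀ :=
      setIntegral_mono_set (hgint L1 le_rfl)
        (ae_of_all _ fun t => (Real.exp_pos _).le)
        (HasSubset.Subset.eventuallyLE Set.diff_subset)
    calc ∫ t in Set.Ioo a b \ S, glam t
        ≤ _ := step1
      _ = _ := step2
      _ ≤ Real.exp (-((lam - L1) * ε₀)) * C₀ :=
          mul_le_mul_of_nonneg_left step3 (Real.exp_pos _).le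
  -- lower bound, central part
  have hlow1 : ∫ t in S, Real.exp (-(lam * B₂ * (t - c)^2)) ≤ ∫ t in S, glam t := by
    refine setIntegral_mono_on hg2.integrableOn hIS measurableSet_Ioo (fun t ht => ?_)
    refine Real.exp_le_exp.2 ?_
    have h := (hquad' t ht).2
    nlinarith [mul_le_mul_of_nonneg_left h hlam0.le]
  have hlow2 : ∫ t in S, glam t ≤ ∫ t in Set.Ioo a b, glam t :=
    setIntegral_mono_set hIioo (ae_of_all _ fun t => (Real.exp_pos _).le)
      (HasSubset.Subset.eventuallyLE hsub)
  have hcompl : ∫ t in S, Real.exp (-(lam * B₂ * (t - c)^2))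
      = Real.sqrt (Real.pi / (lam * B₂)) - ∫ t in Sᶜ, Real.exp (-(lam * B₂ * (t - c)^2)) := by
    have h := integral_add_compl (measurableSet_Ioo : MeasurableSet S) hg2
    rw [gauss_shift (lam * B₂) c] at h
    linarith
  have hcb : ∀ t ∈ Sᶜ, Real.exp (-(lam * B₂ * (t - c)^2))
      ≤ Real.exp (-((lam - 1) * (B₂ * δ^2))) * Real.exp (-(B₂ * (t - c)^2)) := by
    intro t ht
    have hts : δ^2 ≤ (t - c)^2 := by
      have habs : δ ≤ |t - c| := by
        rw [hSdef, Set.mem_compl_iff, Set.mem_Ioo, not_and_or] at ht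
        rw [le_abs]
        rcases ht with h | h
        · push_neg at h; right; linarith
        · push_neg at h; left; linarith
      calc δ^2 ≤ |t - c|^2 := by nlinarith [abs_nonneg (t - c), hδ.le]
        _ = (t - c)^2 := sq_abs _
    rw [← Real.exp_add]
    refine Real.exp_le_exp.2 ?_
    nlinarith [mul_le_mul_of_nonneg_left hts (by nlinarith [hB₂] : (0:ℝ) ≤ (lam - 1) * B₂)]
  have hup3 : ∫ t in Sᶜ, Real.exp (-(lam * B₂ * (t - c)^2))
      ≤ Real.exp (-((lam - 1) * (B₂ * δ^2))) * Real.sqrt (Real.pi / B₂) := by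
    have step1 : ∫ t in Sᶜ, Real.exp (-(lam * B₂ * (t - c)^2))
        ≤ ∫ t in Sᶜ, Real.exp (-((lam - 1) * (B₂ * δ^2))) * Real.exp (-(B₂ * (t - c)^2)) :=
      setIntegral_mono_on hg2.integrableOn (hg3.const_mul _).integrableOn
        measurableSet_Ioo.compl hcb
    have step2 : ∫ t in Sᶜ, Real.exp (-((lam - 1) * (B₂ * δ^2))) * Real.exp (-(B₂ * (t - c)^2))
        = Real.exp (-((lam - 1) * (B₂ * δ^2))) * ∫ t in Sᶜ, Real.exp (-(B₂ * (t - c)^2)) :=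
      integral_const_mul _ _
    have step3 : ∫ t in Sᶜ, Real.exp (-(B₂ * (t - c)^2)) ≤ Real.sqrt (Real.pi / B₂) := by
      rw [← gauss_shift B₂ c]
      exact setIntegral_le_integral hg3 (ae_of_all _ fun t => (Real.exp_pos _).le)
    calc ∫ t in Sᶜ, Real.exp (-(lam * B₂ * (t - c)^2)) ≤ _ := step1
      _ = _ := step2
      _ ≤ _ := mul_le_mul_of_nonneg_left step3 (Real.exp_pos _).le
  -- sqrt algebra
  have hsqrt1 : Real.sqrt lam * Real.sqrt (Real.pi / (lam * B₁))
      = Real.sqrt (2 * Real.pi / (A - ε₁)) := by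
    rw [← Real.sqrt_mul hlam0.le]
    congr 1
    rw [hB₁def]
    field_simp
  have hsqrt2 : Real.sqrt lam * Real.sqrt (Real.pi / (lam * B₂))
      = Real.sqrt (2 * Real.pi / (A + ε₁)) := by
    rw [← Real.sqrt_mul hlam0.le]
    congr 1
    rw [hB₂def]
    field_simp
  -- exponential rewrites matching decay terms
  have hexp1 : Real.exp (-((lam - L1) * ε₀)) * C₀
      = Real.exp (L1 * ε₀) * C₀ * Real.exp (-(ε₀ * lam)) := by
    have h : Real.exp (-((lam - L1) * ε₀)) = Real.exp (L1 * ε₀) * Real.exp (-(ε₀ * lam)) := by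
      rw [← Real.exp_add]; ring_nf
    rw [h]; ring
  have hexp2 : Real.exp (-((lam - 1) * (B₂ * δ^2))) * Real.sqrt (Real.pi / B₂)
      = Real.exp (B₂ * δ^2) * Real.sqrt (Real.pi / B₂) * Real.exp (-(B₂ * δ^2 * lam)) := by
    have h : Real.exp (-((lam - 1) * (B₂ * δ^2)))
        = Real.exp (B₂ * δ^2) * Real.exp (-(B₂ * δ^2 * lam)) := by
      rw [← Real.exp_add]; ring_nf
    rw [h]; ring
  have hsq0 : (0:ℝ) ≤ Real.sqrt lam := Real.sqrt_nonneg _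
  -- final upper estimate
  have hupper : Real.sqrt lam * ∫ t in Set.Ioo a b, glam t
      < Real.sqrt (2 * Real.pi / A) + ε := by
    have h1 : Real.sqrt lam * ∫ t in Set.Ioo a b, glam t
        ≤ Real.sqrt lam * Real.sqrt (Real.pi / (lam * B₁))
          + Real.sqrt lam * (Real.exp (-((lam - L1) * ε₀)) * C₀) := by
      rw [hsplit]
      have := add_le_add (le_trans hup1 hup1') hup2
      nlinarith [mul_le_mul_of_nonneg_left this hsq0]
    rw [hsqrt1, hexp1] at h1
    have h2 : Real.sqrt lam * (Real.exp (L1 * ε₀) * C₀ * Real.exp (-(ε₀ * lam))) < ε/2 :=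
      lt_of_le_of_lt (le_abs_self _) hT₁
    linarith
  -- final lower estimate
  have hlower : Real.sqrt (2 * Real.pi / A) - ε
      < Real.sqrt lam * ∫ t in Set.Ioo a b, glam t := by
    have h1 : Real.sqrt (Real.pi / (lam * B₂))
        - Real.exp (-((lam - 1) * (B₂ * δ^2))) * Real.sqrt (Real.pi / B₂)
        ≤ ∫ t in Set.Ioo a b, glam t := by
      have := le_trans hlow1 hlow2
      rw [hcompl] at this
      linarith [hup3]
    have h2 : Real.sqrt lam * (Real.sqrt (Real.pi / (lam * B₂))
        - Real.exp (-((lam - 1) * (B₂ * δ^2))) * Real.sqrt (Real.pi / B₂))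
        ≤ Real.sqrt lam * ∫ t in Set.Ioo a b, glam t :=
      mul_le_mul_of_nonneg_left h1 hsq0
    rw [mul_sub, hsqrt2, hexp2] at h2
    have h3 : Real.sqrt lam * (Real.exp (B₂ * δ^2) * Real.sqrt (Real.pi / B₂)
        * Real.exp (-(B₂ * δ^2 * lam))) < ε/2 :=
      lt_of_le_of_lt (le_abs_self _) hT₂
    linarith
  rw [Real.dist_eq, abs_lt]
  constructor <;> [linarith [hlower]; linarith [hupper]]

/-- Laplace's method: if `f` is `C²` on `(a,b)` with a unique maximum at `c ∈ (a,b)`,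
`f''(c) < 0`, the maximum is isolated uniformly (for every `δ > 0` the values away from
`c` stay below `f(c)` by a fixed amount), and the integrals `∫_a^b e^{λ f}` exist for
large `λ`, then `∫_a^b e^{λ f(t)} dt ∼ e^{λ f(c)} (2π/(λ |f''(c)|))^{1/2}` as `λ → ∞`,
i.e. the ratio of the two sides tends to `1`. -/
theorem stmt18 (a b c : ℝ) (f : ℝ → ℝ) (hab : a < b) (hc : c ∈ Set.Ioo a b)
    (hf : ContDiffOn ℝ 2 f (Set.Ioo a b))
    (hmax : ∀ t ∈ Set.Ioo a b, t ≠ c → f t < f c)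
    (hsep : ∀ δ > 0, ∃ ε > 0, ∀ t ∈ Set.Ioo a b, δ ≤ |t - c| → f t ≤ f c - ε)
    (hf'' : deriv (deriv f) c < 0)
    (hint : ∀ᶠ lam in atTop, IntegrableOn (fun t => Real.exp (lam * f t)) (Set.Ioo a b)) :
    Tendsto
      (fun lam : ℝ =>
        (∫ t in Set.Ioo a b, Real.exp (lam * f t)) /
          (Real.exp (lam * f c) * Real.sqrt (2 * Real.pi / (lam * |deriv (deriv f) c|))))
      atTop (nhds 1) := by
  have hA : 0 < -deriv (deriv f) c := neg_pos.2 hf''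
  have habs : |deriv (deriv f) c| = -deriv (deriv f) c := abs_of_neg hf''
  have hL : 0 < Real.sqrt (2 * Real.pi / (-deriv (deriv f) c)) := by
    refine Real.sqrt_pos.2 ?_
    have := Real.pi_pos
    positivity
  have h2 := (laplace_main hc hf hmax hsep hf'' hint).div_const
    (Real.sqrt (2 * Real.pi / (-deriv (deriv f) c)))
  rw [div_self hL.ne'] at h2
  refine Filter.Tendsto.congr' ?_ h2
  filter_upwards [eventually_ge_atTop (1:ℝ)] with lam hlam
  have hlam0 : (0:ℝ) < lam := by linarith
  have hsl : 0 < Real.sqrt lam := Real.sqrt_pos.2 hlam0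
  have hnum : ∫ t in Set.Ioo a b, Real.exp (lam * f t)
      = Real.exp (lam * f c) * ∫ t in Set.Ioo a b, Real.exp (lam * (f t - f c)) := by
    rw [← integral_const_mul]
    refine integral_congr_ae (ae_of_all _ fun t => ?_)
    show Real.exp (lam * f t) = Real.exp (lam * f c) * Real.exp (lam * (f t - f c))
    rw [← Real.exp_add]; ring_nf
  have hden : Real.sqrt (2 * Real.pi / (lam * |deriv (deriv f) c|))
      = Real.sqrt (2 * Real.pi / (-deriv (deriv f) c)) / Real.sqrt lam := by
    rw [habs, ← Real.sqrt_div (by positivity : (0:ℝ) ≤ 2 * Real.pi / (-deriv (deriv f) c))]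
    congr 1
    field_simp
  rw [hnum, hden]
  rw [div_eq_div_iff (by positivity) (by positivity)]
  field_simp
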